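/- Let $R$ be a Noetherian ring, $I$ an ideal, $z$ a minimal prime of $R$, and $\mathfrak{p}$ a prime minimal over $I + z$. Then $\mathfrak{p} \in \overline{Q^*}(I)$. -/

import Mathlib

open IsLocalRing

noncomputable section

/-- The completion of a local ring at its maximal ideal. -/
abbrev Cmpl (A : Type*) [CommRing A] [IsLocalRing A] : Type _ :=
  AdicCompletion (maximalIdeal A) A

variable (R : Type*) [CommRing R]

/-- `p` is a quintasymptotic prime of `I`: there is a minimal prime `z` of the completion
`(R_p)^*` of the localization at `p` such that `Rad (I (R_p)^* + z) = p (R_p)^*`. -/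
def IsQStar (I p : Ideal R) [p.IsPrime] : Prop :=
  I ≤ p ∧ ∃ z ∈ minimalPrimes (Cmpl (Localization.AtPrime p)),
    (Ideal.map (algebraMap (Localization.AtPrime p) (Cmpl (Localization.AtPrime p)))
        (Ideal.map (algebraMap R (Localization.AtPrime p)) I) ⊔ z).radical =
      Ideal.map (algebraMap (Localization.AtPrime p) (Cmpl (Localization.AtPrime p)))
        (maximalIdeal (Localization.AtPrime p))

/-- The set `Q̄*(I)` of quintasymptotic primes of `I`. -/
def QStarSet (I : Ideal R) : Set (Ideal R) :=
  {p | ∃ h : p.IsPrime, letI := h; IsQStar R I p}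

/-- `xs` is a quintasymptotic sequence over `I`. -/
def IsQASeq (I : Ideal R) (xs : List R) : Prop :=
  I ⊔ Ideal.span {a | a ∈ xs} ≠ ⊤ ∧
  ∀ i : Fin xs.length, ∀ p ∈ QStarSet R (I ⊔ Ideal.span {a | a ∈ xs.take i}), xs.get i ∉ p

/-- `xs` is a maximal quintasymptotic sequence over `I`. -/
def IsMaxQASeq (I : Ideal R) (xs : List R) : Prop :=
  IsQASeq R I xs ∧ ∀ y : R, ¬ IsQASeq R I (xs ++ [y])

/-- The quintasymptotic cograde of an ideal of a local ring. -/
def qacogd [IsLocalRing R] (I : Ideal R) : WithBot ℕ∞ :=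
  ⨅ z ∈ minimalPrimes (Cmpl R),
    ringKrullDim ((Cmpl R) ⧸ (Ideal.map (algebraMap R (Cmpl R)) I ⊔ z))

/-- The height of an ideal. -/
def idealHeight (I : Ideal R) : WithBot ℕ∞ :=
  ⨅ p, ⨅ h : p ∈ I.minimalPrimes,
    letI : p.IsPrime := h.1.1
    ringKrullDim (Localization.AtPrime p)

end

section QAuxSection
open AdicCompletion
set_option linter.unusedSectionVars false

section Aux
variable {S : Type*} [CommRing S] [IsLocalRing S]

/-- `val` at level `k` as a ring hom. -/
def QAux.valRingHom (k : ℕ) :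
    AdicCompletion (maximalIdeal S) S →+* S ⧸ ((maximalIdeal S) ^ k • ⊤ : Ideal S) where
  toFun c := c.val k
  map_one' := rfl
  map_mul' _ _ := rfl
  map_zero' := rfl
  map_add' _ _ := rfl

lemma QAux.pow_smul_top (k : ℕ) :
    ((maximalIdeal S) ^ k • ⊤ : Ideal S) = (maximalIdeal S) ^ k := by
  ext x; simp

lemma QAux.val_algebraMap (s : S) (n : ℕ) :
    (algebraMap S (AdicCompletion (maximalIdeal S) S) s).val n =
      Ideal.Quotient.mk ((maximalIdeal S) ^ n • ⊤ : Ideal S) s := rfl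

lemma QAux.val_eq_zero_of_mem_map_pow {k : ℕ} {c : AdicCompletion (maximalIdeal S) S}
    (hc : c ∈ Ideal.map (algebraMap S (AdicCompletion (maximalIdeal S) S))
      ((maximalIdeal S) ^ k)) : c.val k = 0 := by
  have h : Ideal.map (algebraMap S (AdicCompletion (maximalIdeal S) S)) ((maximalIdeal S) ^ k)
      ≤ RingHom.ker (QAux.valRingHom k) := by
    rw [Ideal.map_le_iff_le_comap]
    intro t ht
    show QAux.valRingHom k (algebraMap S (AdicCompletion (maximalIdeal S) S) t) = 0
    show Ideal.Quotient.mk ((maximalIdeal S) ^ k • ⊤ : Ideal S) t = 0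
    rw [Ideal.Quotient.eq_zero_iff_mem, QAux.pow_smul_top]
    exact ht
  exact h hc
end Aux

section Aux2
variable {S : Type*} [CommRing S] [IsLocalRing S]

lemma QAux.isUnit_one_add {a : AdicCompletion (maximalIdeal S) S}
    (ha : a ∈ Ideal.map (algebraMap S (AdicCompletion (maximalIdeal S) S)) (maximalIdeal S)) :
    IsUnit (1 + a) := by
  have hpow : ∀ {k m : ℕ}, m ≤ k → ((-a) ^ k).val m = 0 := by
    intro k m hmk
    apply QAux.val_eq_zero_of_mem_map_pow
    rw [Ideal.map_pow]
    exact Ideal.pow_le_pow_right hmk (Ideal.pow_mem_pow (neg_mem ha) k)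
  have hb : ∀ {m n : ℕ} (hmn : m ≤ n),
      AdicCompletion.transitionMap (maximalIdeal S) S hmn
        ((∑ k ∈ Finset.range n, (-a) ^ k).val n) =
        (∑ k ∈ Finset.range m, (-a) ^ k).val m := by
    intro m n hmn
    rw [(∑ k ∈ Finset.range n, (-a) ^ k).property hmn]
    have h0 : ((∑ k ∈ Finset.range n, (-a) ^ k) - (∑ k ∈ Finset.range m, (-a) ^ k)).val m = 0 := by
      rw [← Finset.sum_Ico_eq_sub _ hmn, AdicCompletion.val_sum_apply]
      apply Finset.sum_eq_zero
      intro k hk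
      exact hpow (Finset.mem_Ico.mp hk).1
    rw [AdicCompletion.val_sub_apply] at h0
    exact sub_eq_zero.mp h0
  let b : AdicCompletion (maximalIdeal S) S :=
    ⟨fun n => (∑ k ∈ Finset.range n, (-a) ^ k).val n, hb⟩
  have hbval : ∀ n, b.val n = (∑ k ∈ Finset.range n, (-a) ^ k).val n := fun n => rfl
  refine IsUnit.of_mul_eq_one b ?_
  apply AdicCompletion.ext
  intro n
  rw [AdicCompletion.val_mul, hbval, ← AdicCompletion.val_mul]
  have hgeo : (1 + a) * (∑ k ∈ Finset.range n, (-a) ^ k) = 1 - (-a) ^ n := by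
    have := mul_neg_geom_sum (-a) n
    rwa [sub_neg_eq_add] at this
  rw [hgeo, AdicCompletion.val_sub_apply, hpow le_rfl, sub_zero, AdicCompletion.val_one]
end Aux2


section AuxD
variable {S : Type*} [CommRing S] [IsLocalRing S] [IsNoetherianRing S]

lemma QAux.mem_map_of_val_one_eq_zero {c : AdicCompletion (maximalIdeal S) S}
    (hc : c.val 1 = 0) :
    c ∈ Ideal.map (algebraMap S (AdicCompletion (maximalIdeal S) S)) (maximalIdeal S) := by
  classical
  have hfin : Module.Finite S ↥(maximalIdeal S) :=
    Module.Finite.iff_fg.mpr (IsNoetherian.noetherian (maximalIdeal S))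
  have hexact := AdicCompletion.map_exact (I := maximalIdeal S)
    (Submodule.injective_subtype (maximalIdeal S))
    (LinearMap.exact_subtype_mkQ (maximalIdeal S)) (Submodule.mkQ_surjective (maximalIdeal S))
  have hker : AdicCompletion.map (maximalIdeal S) (maximalIdeal S).mkQ c = 0 := by
    apply AdicCompletion.ext
    intro n
    rw [AdicCompletion.map_val_apply, AdicCompletion.val_zero_apply]
    obtain ⟨s, hs⟩ := Submodule.mkQ_surjective _ (c.val n)
    rcases Nat.eq_zero_or_pos n with hn | hn
    · subst hn
      have htop : ((maximalIdeal S) ^ 0 • ⊤ : Submodule S (S ⧸ maximalIdeal S)) = ⊤ := by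
        rw [pow_zero, Ideal.one_eq_top]; exact Submodule.top_smul _
      have hsub : Subsingleton ((S ⧸ maximalIdeal S) ⧸
          ((maximalIdeal S) ^ 0 • ⊤ : Submodule S (S ⧸ maximalIdeal S))) :=
        Submodule.Quotient.subsingleton_iff.mpr htop
      exact Subsingleton.elim _ _
    · have h1 : AdicCompletion.transitionMap (maximalIdeal S) S hn (c.val n) = c.val 1 :=
        c.property hn
      rw [hc, ← hs] at h1
      have h1' : AdicCompletion.transitionMap (maximalIdeal S) S hn
          (Submodule.Quotient.mk (p := ((maximalIdeal S) ^ n • ⊤ : Submodule S S)) s) = 0 := h1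
      change Submodule.Quotient.mk (p := ((maximalIdeal S) ^ 1 • ⊤ : Submodule S S)) s = 0 at h1'
      have hsm : s ∈ maximalIdeal S := by
        have h2 := (Submodule.Quotient.mk_eq_zero _).mp h1'
        have h3 : ((maximalIdeal S) ^ 1 • ⊤ : Submodule S S) = maximalIdeal S := by
          ext x; simp
        rwa [h3] at h2
      have hs' : c.val n = Submodule.Quotient.mk (p := ((maximalIdeal S) ^ n • ⊤ : Submodule S S)) s :=
        hs.symm
      rw [hs', LinearMap.reduceModIdeal_apply]
      rw [Submodule.Quotient.mk_eq_zero]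
      have : (maximalIdeal S).mkQ s = 0 := (Submodule.Quotient.mk_eq_zero _).mpr hsm
      rw [this]
      exact Submodule.zero_mem _
  obtain ⟨y, hy⟩ := (hexact c).mp hker
  obtain ⟨t, ht⟩ := AdicCompletion.ofTensorProduct_surjective_of_finite
    (maximalIdeal S) ↥(maximalIdeal S) y
  have hmapof : ∀ x : ↥(maximalIdeal S),
      AdicCompletion.map (maximalIdeal S) (maximalIdeal S).subtype
        (AdicCompletion.of (maximalIdeal S) ↥(maximalIdeal S) x) =
      algebraMap S (AdicCompletion (maximalIdeal S) S) ((maximalIdeal S).subtype x) := by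
    intro x
    apply AdicCompletion.ext
    intro n
    rw [AdicCompletion.map_val_apply]
    rfl
  have key : ∀ t : TensorProduct S (AdicCompletion (maximalIdeal S) S) ↥(maximalIdeal S),
      AdicCompletion.map (maximalIdeal S) (maximalIdeal S).subtype
        (AdicCompletion.ofTensorProduct (maximalIdeal S) ↥(maximalIdeal S) t) ∈
        Ideal.map (algebraMap S (AdicCompletion (maximalIdeal S) S)) (maximalIdeal S) := by
    intro t
    induction t using TensorProduct.induction_on with
    | zero => simp
    | tmul r x =>
        rw [AdicCompletion.ofTensorProduct_tmul, map_smul, hmapof]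
        have h3 : r • algebraMap S (AdicCompletion (maximalIdeal S) S)
              ((maximalIdeal S).subtype x) =
            r * algebraMap S (AdicCompletion (maximalIdeal S) S)
              ((maximalIdeal S).subtype x) := rfl
        rw [h3]
        exact Ideal.mul_mem_left _ r (Ideal.mem_map_of_mem _ x.2)
    | add u v hu hv => rw [map_add, map_add]; exact Ideal.add_mem _ hu hv
  rw [← hy, ← ht]
  exact key t
end AuxD


set_option linter.unusedSectionVars false

section AuxE
variable {S : Type*} [CommRing S] [IsLocalRing S] [IsNoetherianRing S]

lemma QAux.pow_smul_top' (k : ℕ) :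
    ((maximalIdeal S) ^ k • ⊤ : Ideal S) = (maximalIdeal S) ^ k := by
  ext x; simp

lemma QAux.one_val_one_ne : ((1 : AdicCompletion (maximalIdeal S) S).val 1) ≠ 0 := by
  rw [AdicCompletion.val_one]
  have h1 : ((maximalIdeal S) ^ 1 • ⊤ : Ideal S) ≠ ⊤ := by
    rw [QAux.pow_smul_top', pow_one]
    exact Ideal.IsMaximal.ne_top (maximalIdeal.isMaximal S)
  haveI : Nontrivial (S ⧸ ((maximalIdeal S) ^ 1 • ⊤ : Ideal S)) :=
    Ideal.Quotient.nontrivial_iff.mpr h1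
  exact one_ne_zero

lemma QAux.map_max_ne_top : Ideal.map (algebraMap S (AdicCompletion (maximalIdeal S) S))
    (maximalIdeal S) ≠ ⊤ := by
  intro h
  apply QAux.one_val_one_ne (S := S)
  apply QAux.val_eq_zero_of_mem_map_pow (k := 1)
  rw [pow_one, h]
  exact Submodule.mem_top

lemma QAux.isUnit_of_not_mem_map {x : AdicCompletion (maximalIdeal S) S}
    (hx : x ∉ Ideal.map (algebraMap S (AdicCompletion (maximalIdeal S) S)) (maximalIdeal S)) :
    IsUnit x := by
  have h1 : x.val 1 ≠ 0 := fun h => hx (QAux.mem_map_of_val_one_eq_zero h)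
  obtain ⟨s, hs⟩ := Ideal.Quotient.mk_surjective (I := ((maximalIdeal S) ^ 1 • ⊤ : Ideal S))
    (x.val 1)
  have hsu : IsUnit s := by
    by_contra hns
    apply h1
    rw [← hs, Ideal.Quotient.eq_zero_iff_mem, QAux.pow_smul_top', pow_one]
    exact (mem_maximalIdeal s).mpr (mem_nonunits_iff.mpr hns)
  obtain ⟨u, hu⟩ := hsu.exists_right_inv
  have hw : (x * algebraMap S (AdicCompletion (maximalIdeal S) S) u - 1).val 1 = 0 := by
    rw [AdicCompletion.val_sub_apply, AdicCompletion.val_mul, AdicCompletion.val_one]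
    have hvu : (algebraMap S (AdicCompletion (maximalIdeal S) S) u).val 1 =
        Ideal.Quotient.mk ((maximalIdeal S) ^ 1 • ⊤ : Ideal S) u := rfl
    rw [hvu, ← hs, ← map_mul, hu, map_one, sub_self]
  have hmem := QAux.mem_map_of_val_one_eq_zero hw
  have hunit := QAux.isUnit_one_add hmem
  have heq : (1 : AdicCompletion (maximalIdeal S) S) +
      (x * algebraMap S (AdicCompletion (maximalIdeal S) S) u - 1) =
      x * algebraMap S (AdicCompletion (maximalIdeal S) S) u := by ring
  rw [heq] at hunit
  exact isUnit_of_mul_isUnit_left hunit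

lemma QAux.isLocalRing : IsLocalRing (AdicCompletion (maximalIdeal S) S) := by
  haveI : Nontrivial (AdicCompletion (maximalIdeal S) S) := by
    refine ⟨1, 0, fun h => QAux.one_val_one_ne (S := S) ?_⟩
    rw [h]; rfl
  apply IsLocalRing.of_nonunits_add
  intro a b ha hb
  rw [mem_nonunits_iff] at *
  intro hab
  have hma : a ∈ Ideal.map (algebraMap S (AdicCompletion (maximalIdeal S) S)) (maximalIdeal S) :=
    by_contra fun h => ha (QAux.isUnit_of_not_mem_map h)
  have hmb : b ∈ Ideal.map (algebraMap S (AdicCompletion (maximalIdeal S) S)) (maximalIdeal S) :=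
    by_contra fun h => hb (QAux.isUnit_of_not_mem_map h)
  exact QAux.map_max_ne_top (S := S)
    (Ideal.eq_top_of_isUnit_mem _ (Ideal.add_mem _ hma hmb) hab)

lemma QAux.maximalIdeal_eq :
    letI := QAux.isLocalRing (S := S)
    maximalIdeal (AdicCompletion (maximalIdeal S) S) =
      Ideal.map (algebraMap S (AdicCompletion (maximalIdeal S) S)) (maximalIdeal S) := by
  letI := QAux.isLocalRing (S := S)
  ext x
  rw [mem_maximalIdeal, mem_nonunits_iff]
  constructor
  · intro h
    exact by_contra fun hm => h (QAux.isUnit_of_not_mem_map hm)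
  · intro hmem hxu
    exact QAux.map_max_ne_top (S := S) (Ideal.eq_top_of_isUnit_mem _ hmem hxu)
end AuxE

end QAuxSection

/-- if `z` is a minimal prime of `R` and `p` is minimal over `I + z`, then
`p ∈ Q̄*(I)`. -/
theorem mem_QStarSet_of_minimal_over_sup (R : Type*) [CommRing R] [IsNoetherianRing R]
    (I z p : Ideal R) (hz : z ∈ minimalPrimes R) (hp : p ∈ (I ⊔ z).minimalPrimes) :
    p ∈ QStarSet R I := by
  have hpp : p.IsPrime := hp.1.1
  haveI := hpp
  haveI : IsNoetherianRing (Localization.AtPrime p) :=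
    IsLocalization.isNoetherianRing p.primeCompl (Localization.AtPrime p) ‹_›
  set S := Localization.AtPrime p with hS
  haveI : IsLocalization p.primeCompl S := Localization.isLocalization
  haveI : IsLocalRing S := Localization.AtPrime.isLocalRing p
  set f := algebraMap R S with hf
  have hzp : z ≤ p := le_trans le_sup_right hp.1.2
  have hz_disj : Disjoint (p.primeCompl : Set R) (z : Set R) := by
    rw [Set.disjoint_left]
    intro x hx hxz
    exact hx (hzp hxz)
  have hw_prime : (z.map f).IsPrime :=
    IsLocalization.isPrime_of_isPrime_disjoint p.primeCompl S z hz.1.1 hz_disj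
  have hw_comap : (z.map f).comap f = z :=
    IsLocalization.comap_map_of_isPrime_disjoint p.primeCompl S hz.1.1 hz_disj
  have hw_min : z.map f ∈ minimalPrimes S := by
    refine ⟨⟨hw_prime, bot_le⟩, ?_⟩
    intro q hq hqle
    haveI := hq.1
    have h1 : q.comap f ≤ z := le_trans (Ideal.comap_mono hqle) (le_of_eq hw_comap)
    have h2 : z ≤ q.comap f := hz.2 ⟨hq.1.comap f, bot_le⟩ h1
    calc z.map f ≤ (q.comap f).map f := Ideal.map_mono h2
    _ = q := IsLocalization.map_comap p.primeCompl S q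
  have hcomap_le : ∀ q : Ideal S, q.IsPrime → q.comap f ≤ p := by
    intro q hq x hx
    by_contra hxp
    exact hq.ne_top (Ideal.eq_top_of_isUnit_mem q hx (IsLocalization.map_units (M := p.primeCompl) S ⟨x, hxp⟩))
  have hmapp : Ideal.map f p = maximalIdeal S := Localization.AtPrime.map_eq_maximalIdeal
  have hm : (Ideal.map f I ⊔ z.map f).radical = maximalIdeal S := by
    apply le_antisymm
    · have hprime : (maximalIdeal S).IsPrime := Ideal.IsMaximal.isPrime inferInstance
      rw [hprime.radical_le_iff]
      rw [← hmapp, ← Ideal.map_sup]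
      exact Ideal.map_mono hp.1.2
    · rw [Ideal.radical_eq_sInf]
      refine le_sInf ?_
      rintro q ⟨hle, hq⟩
      haveI := hq
      have h1 : I ⊔ z ≤ q.comap f := by
        calc I ⊔ z ≤ (Ideal.map f (I ⊔ z)).comap f := Ideal.le_comap_map
        _ ≤ q.comap f := Ideal.comap_mono (by rw [Ideal.map_sup]; exact hle)
      have h3 : p ≤ q.comap f := hp.2 ⟨hq.comap f, h1⟩ (hcomap_le q hq)
      calc maximalIdeal S = Ideal.map f p := hmapp.symm
      _ ≤ Ideal.map f (q.comap f) := Ideal.map_mono h3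
      _ = q := IsLocalization.map_comap p.primeCompl S q
  haveI hCloc : IsLocalRing (Cmpl S) := QAux.isLocalRing
  have hmax := QAux.maximalIdeal_eq (S := S)
  set φ := algebraMap S (Cmpl S) with hφ
  have hker : (⊥ : Ideal (Cmpl S)).comap φ = ⊥ := by
    rw [eq_bot_iff]
    intro x hx
    have hx0 : φ x = 0 := hx
    have hiInf : (⨅ n : ℕ, ((maximalIdeal S) ^ n • ⊤ : Submodule S S)) = ⊥ :=
      Ideal.iInf_pow_smul_eq_bot_of_isLocalRing _ (Ideal.IsMaximal.ne_top inferInstance)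
    have hmem : x ∈ (⨅ n : ℕ, ((maximalIdeal S) ^ n • ⊤ : Submodule S S)) := by
      rw [Submodule.mem_iInf]
      intro n
      have hv : (φ x).val n = Ideal.Quotient.mk ((maximalIdeal S) ^ n • ⊤ : Ideal S) x := rfl
      rw [hx0] at hv
      have : Ideal.Quotient.mk ((maximalIdeal S) ^ n • ⊤ : Ideal S) x = 0 := by
        rw [← hv]; rfl
      exact (Ideal.Quotient.eq_zero_iff_mem).mp this
    rw [hiInf] at hmem
    exact hmem
  have hwmin' : z.map f ∈ ((⊥ : Ideal (Cmpl S)).comap φ).minimalPrimes := by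
    rw [hker]
    exact hw_min
  obtain ⟨z', hz'min, hz'comap⟩ := Ideal.exists_minimalPrimes_comap_eq (φ : S →+* Cmpl S)
    (z.map f) hwmin'
  refine ⟨hpp, le_trans le_sup_left hp.1.2, z', hz'min, ?_⟩
  have hz'le : z' ≤ maximalIdeal (Cmpl S) := IsLocalRing.le_maximalIdeal hz'min.1.1.ne_top
  have hsub : Ideal.map φ (Ideal.map f I) ⊔ z' ≤ Ideal.map φ (maximalIdeal S) := by
    rw [← hmax]
    refine sup_le ?_ hz'le
    rw [hmax]
    apply Ideal.map_mono
    rw [← hmapp]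
    exact Ideal.map_mono (le_trans le_sup_left hp.1.2)
  apply le_antisymm
  · have hprime : (Ideal.map φ (maximalIdeal S)).IsPrime := by
      rw [← hmax]
      exact Ideal.IsMaximal.isPrime inferInstance
    rw [hprime.radical_le_iff]
    exact hsub
  · calc Ideal.map φ (maximalIdeal S)
        = Ideal.map φ ((Ideal.map f I ⊔ z.map f).radical) := by rw [hm]
    _ ≤ (Ideal.map φ (Ideal.map f I ⊔ z.map f)).radical := Ideal.map_radical_le φ
    _ ≤ (Ideal.map φ (Ideal.map f I) ⊔ z').radical := by
        apply Ideal.radical_mono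
        rw [Ideal.map_sup]
        exact sup_le_sup le_rfl (Ideal.map_le_of_le_comap (le_of_eq hz'comap.symm))
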